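/- Let j be odd, and let x, m, p ⊆ [n]_{j+1} and x̄, m̄, p̄ ⊆ [n]_{j+2} be such that the sets ending in n+1 and those not are disjoint. Then the movement condition (x̄ ∪ x∨) : (m̄ ∪ m∨) ⇝ (p̄ ∪ p∨) holds if and only if the four conditions hold: p = (m ∪ x⁺)\x⁻, m = (p ∪ x⁻)\x⁺, p̄ = (m̄ ∪ x̄⁺)\(x̄⁻ ∪ x), and m̄ = (p̄ ∪ x̄⁻ ∪ x)\x̄⁺. -/

import Mathlib

/-- `Simplex n j` is the set `[n]_j` of order-preserving injections `[j] ↪ [n]`. -/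
abbrev Simplex (n j : ℕ) := Fin (j+1) ↪o Fin (n+1)

/-- The `k`-th face `a ∘ δ_k` of `a ∈ [n]_{j+1}`. -/
def face {n j : ℕ} (a : Simplex n (j+1)) (k : Fin (j+2)) : Simplex n j :=
  (Fin.succAboveOrderEmb k).trans a

/-- The even faces `a⁺` of `a`. -/
def posFaces {n j : ℕ} (a : Simplex n (j+1)) : Set (Simplex n j) :=
  {b | ∃ k : Fin (j+2), Even (k : ℕ) ∧ b = face a k}

/-- The odd faces `a⁻` of `a`. -/
def negFaces {n j : ℕ} (a : Simplex n (j+1)) : Set (Simplex n j) :=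
  {b | ∃ k : Fin (j+2), Odd (k : ℕ) ∧ b = face a k}

def setPos {n j : ℕ} (ξ : Set (Simplex n (j+1))) : Set (Simplex n j) := ⋃ a ∈ ξ, posFaces a
def setNeg {n j : ℕ} (ξ : Set (Simplex n (j+1))) : Set (Simplex n j) := ⋃ a ∈ ξ, negFaces a

/-- The inclusion `[n]_j ⊆ [n+1]_j`. -/
def liftS {n j : ℕ} (a : Simplex n j) : Simplex (n+1) j :=
  a.trans (OrderEmbedding.ofStrictMono Fin.castSucc Fin.strictMono_castSucc)

/-- `a∨ ∈ [n+1]_{j+1}`: append the new top element `n+1` to `a ∈ [n]_j`. -/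
def vee {n j : ℕ} (a : Simplex n j) : Simplex (n+1) (j+1) :=
  OrderEmbedding.ofStrictMono (Fin.snoc (fun i => (a i).castSucc) (Fin.last (n+1))) (by
    intro i k h
    rcases Fin.eq_castSucc_or_eq_last k with ⟨k', rfl⟩ | rfl
    · rcases Fin.eq_castSucc_or_eq_last i with ⟨i', rfl⟩ | rfl
      · simpa only [Fin.snoc_castSucc] using
          Fin.castSucc_lt_castSucc_iff.mpr (a.strictMono (Fin.castSucc_lt_castSucc_iff.mp h))
      · exact absurd (lt_trans h (Fin.castSucc_lt_last k')) (lt_irrefl _)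
    · rcases Fin.eq_castSucc_or_eq_last i with ⟨i', rfl⟩ | rfl
      · simp only [Fin.snoc_castSucc, Fin.snoc_last]
        exact Fin.castSucc_lt_last _
      · exact absurd h (lt_irrefl _))

/-- A subset of `[n]_{j+1}` is well-formed if distinct elements share no even face
and no odd face. -/
def WellFormed {n j : ℕ} (ξ : Set (Simplex n (j+1))) : Prop :=
  ∀ a ∈ ξ, ∀ b ∈ ξ, a ≠ b →
    posFaces a ∩ posFaces b = ∅ ∧ negFaces a ∩ negFaces b = ∅

/-- `ξ` moves `μ` to `π`. -/
def Moves {n j : ℕ} (ξ : Set (Simplex n (j+1))) (μ π : Set (Simplex n j)) : Prop :=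
  π = (μ ∪ setPos ξ) \ setNeg ξ ∧ μ = (π ∪ setNeg ξ) \ setPos ξ

/- ### Auxiliary lemmas -/

lemma oe_ext {a b : ℕ} {f g : Fin a ↪o Fin b} (h : ∀ i, f i = g i) : f = g :=
  DFunLike.ext f g h

lemma liftS_apply {n j : ℕ} (a : Simplex n j) (i : Fin (j+1)) :
    liftS a i = (a i).castSucc := rfl

lemma vee_castSucc {n j : ℕ} (a : Simplex n j) (i : Fin (j+1)) :
    vee a i.castSucc = (a i).castSucc := by
  simp [vee, OrderEmbedding.ofStrictMono]

lemma vee_last {n j : ℕ} (a : Simplex n j) :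
    vee a (Fin.last (j+1)) = Fin.last (n+1) := by
  simp [vee, OrderEmbedding.ofStrictMono]

lemma face_apply {n j : ℕ} (a : Simplex n (j+1)) (k : Fin (j+2)) (i : Fin (j+1)) :
    face a k i = a (k.succAbove i) := rfl

lemma face_liftS {n j : ℕ} (a : Simplex n (j+1)) (k : Fin (j+2)) :
    face (liftS a) k = liftS (face a k) := rfl

lemma liftS_inj {n j : ℕ} : Function.Injective (liftS (n := n) (j := j)) := by
  intro a b h
  apply oe_ext
  intro i
  have := congrArg (fun f : Simplex (n+1) j => f i) h
  simpa [liftS_apply, Fin.castSucc_inj] using this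

lemma vee_inj {n j : ℕ} : Function.Injective (vee (n := n) (j := j)) := by
  intro a b h
  apply oe_ext
  intro i
  have := congrArg (fun f : Simplex (n+1) (j+1) => f i.castSucc) h
  simpa [vee_castSucc, Fin.castSucc_inj] using this

lemma liftS_ne_vee {n j' : ℕ} (a : Simplex n (j'+1)) (b : Simplex n j')
    (h : liftS a = vee b) : False := by
  have := congrArg (fun f : Simplex (n+1) (j'+1) => f (Fin.last (j'+1))) h
  simp only [liftS_apply, vee_last] at this
  exact absurd this (Fin.castSucc_lt_last _).ne

lemma face_vee_castSucc {n j : ℕ} (a : Simplex n (j+1)) (k : Fin (j+2)) :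
    face (vee a) k.castSucc = vee (face a k) := by
  apply oe_ext
  intro i
  rcases Fin.eq_castSucc_or_eq_last i with ⟨i', rfl⟩ | rfl
  · rw [face_apply, Fin.castSucc_succAbove_castSucc, vee_castSucc, vee_castSucc, face_apply]
  · rw [face_apply, vee_last]
    have : (k.castSucc).succAbove (Fin.last (j+1)) = Fin.last (j+2) := by
      rw [Fin.succAbove_of_le_castSucc _ _
        (Fin.castSucc_le_castSucc_iff.mpr (Fin.le_last k)), Fin.succ_last]
    rw [this, vee_last]

lemma face_vee_last {n j : ℕ} (a : Simplex n (j+1)) :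
    face (vee a) (Fin.last (j+2)) = liftS a := by
  apply oe_ext
  intro i
  rw [face_apply, Fin.succAbove_last, vee_castSucc, liftS_apply]

lemma posFaces_liftS {n j : ℕ} (a : Simplex n (j+1)) :
    posFaces (liftS a) = liftS '' posFaces a := by
  ext b; constructor
  · rintro ⟨k, hk, rfl⟩
    exact ⟨face a k, ⟨k, hk, rfl⟩, (face_liftS a k).symm⟩
  · rintro ⟨b', ⟨k, hk, rfl⟩, rfl⟩
    exact ⟨k, hk, (face_liftS a k).symm⟩

lemma negFaces_liftS {n j : ℕ} (a : Simplex n (j+1)) :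
    negFaces (liftS a) = liftS '' negFaces a := by
  ext b; constructor
  · rintro ⟨k, hk, rfl⟩
    exact ⟨face a k, ⟨k, hk, rfl⟩, (face_liftS a k).symm⟩
  · rintro ⟨b', ⟨k, hk, rfl⟩, rfl⟩
    exact ⟨k, hk, (face_liftS a k).symm⟩

lemma posFaces_vee {n j : ℕ} (hj : Odd j) (a : Simplex n (j+1)) :
    posFaces (vee a) = vee '' posFaces a := by
  ext b; constructor
  · rintro ⟨k, hk, rfl⟩
    rcases Fin.eq_castSucc_or_eq_last k with ⟨k', rfl⟩ | rfl
    · exact ⟨face a k', ⟨k', by simpa using hk, rfl⟩, (face_vee_castSucc a k').symm⟩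
    · exfalso
      rw [Fin.val_last] at hk
      rcases hj with ⟨t, rfl⟩
      rw [Nat.even_iff] at hk; omega
  · rintro ⟨b', ⟨k, hk, rfl⟩, rfl⟩
    exact ⟨k.castSucc, by simpa using hk, (face_vee_castSucc a k).symm⟩

lemma negFaces_vee {n j : ℕ} (a : Simplex n (j+1)) (hj : Odd j) :
    negFaces (vee a) = vee '' negFaces a ∪ {liftS a} := by
  ext b; constructor
  · rintro ⟨k, hk, rfl⟩
    rcases Fin.eq_castSucc_or_eq_last k with ⟨k', rfl⟩ | rfl
    · exact Or.inl ⟨face a k', ⟨k', by simpa using hk, rfl⟩, (face_vee_castSucc a k').symm⟩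
    · exact Or.inr (by simp [face_vee_last])
  · rintro (⟨b', ⟨k, hk, rfl⟩, rfl⟩ | rfl)
    · exact ⟨k.castSucc, by simpa using hk, (face_vee_castSucc a k).symm⟩
    · exact ⟨Fin.last (j+2), by rcases hj with ⟨t, rfl⟩; simp [Nat.odd_iff],
        (face_vee_last a).symm⟩

lemma setPos_union {n j : ℕ} (A B : Set (Simplex n (j+1))) :
    setPos (A ∪ B) = setPos A ∪ setPos B := by
  rw [setPos, Set.biUnion_union]; rfl

lemma setNeg_union {n j : ℕ} (A B : Set (Simplex n (j+1))) :
    setNeg (A ∪ B) = setNeg A ∪ setNeg B := by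
  rw [setNeg, Set.biUnion_union]; rfl

lemma setPos_liftS {n j : ℕ} (A : Set (Simplex n (j+1))) :
    setPos (liftS '' A) = liftS '' setPos A := by
  simp only [setPos, Set.biUnion_image, posFaces_liftS, Set.image_iUnion]

lemma setNeg_liftS {n j : ℕ} (A : Set (Simplex n (j+1))) :
    setNeg (liftS '' A) = liftS '' setNeg A := by
  simp only [setNeg, Set.biUnion_image, negFaces_liftS, Set.image_iUnion]

lemma setPos_vee {n j : ℕ} (hj : Odd j) (A : Set (Simplex n (j+1))) :
    setPos (vee '' A) = vee '' setPos A := by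
  simp only [setPos, Set.biUnion_image, posFaces_vee hj, Set.image_iUnion]

lemma setNeg_vee {n j : ℕ} (hj : Odd j) (A : Set (Simplex n (j+1))) :
    setNeg (vee '' A) = vee '' setNeg A ∪ liftS '' A := by
  simp only [setNeg, Set.biUnion_image]
  ext b
  simp only [Set.mem_iUnion, negFaces_vee _ hj, Set.mem_union, Set.mem_image,
    Set.mem_singleton_iff, Set.mem_iUnion]
  constructor
  · rintro ⟨a, ha, (⟨c, hc, rfl⟩ | rfl)⟩
    · exact Or.inl ⟨c, ⟨a, ha, hc⟩, rfl⟩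
    · exact Or.inr ⟨a, ha, rfl⟩
  · rintro (⟨c, ⟨a, ha, hc⟩, rfl⟩ | ⟨a, ha, rfl⟩)
    · exact ⟨a, ha, Or.inl ⟨c, hc, rfl⟩⟩
    · exact ⟨a, ha, Or.inr rfl⟩

section Split
variable {α β γ : Type*} {f : α → γ} {g : β → γ}
  (hf : Function.Injective f) (hg : Function.Injective g)
  (hfg : ∀ a b, f a ≠ g b)

include hf hg hfg in
lemma union_eq_iff {A C : Set α} {B D : Set β} :
    f '' A ∪ g '' B = f '' C ∪ g '' D ↔ A = C ∧ B = D := by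
  constructor
  · intro h
    constructor
    · ext a
      constructor
      · intro ha
        have : f a ∈ f '' C ∪ g '' D := h ▸ Or.inl ⟨a, ha, rfl⟩
        rcases this with ⟨c, hc, heq⟩ | ⟨d, hd, heq⟩
        · exact hf heq ▸ hc
        · exact absurd heq.symm (hfg a d)
      · intro ha
        have : f a ∈ f '' A ∪ g '' B := h.symm ▸ Or.inl ⟨a, ha, rfl⟩
        rcases this with ⟨c, hc, heq⟩ | ⟨d, hd, heq⟩
        · exact hf heq ▸ hc
        · exact absurd heq.symm (hfg a d)
    · ext b
      constructor
      · intro hb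
        have : g b ∈ f '' C ∪ g '' D := h ▸ Or.inr ⟨b, hb, rfl⟩
        rcases this with ⟨c, hc, heq⟩ | ⟨d, hd, heq⟩
        · exact absurd heq (hfg c b)
        · exact hg heq ▸ hd
      · intro hb
        have : g b ∈ f '' A ∪ g '' B := h.symm ▸ Or.inr ⟨b, hb, rfl⟩
        rcases this with ⟨c, hc, heq⟩ | ⟨d, hd, heq⟩
        · exact absurd heq (hfg c b)
        · exact hg heq ▸ hd
  · rintro ⟨rfl, rfl⟩; rfl

include hf hg hfg in
lemma diff_split {A C : Set α} {B D : Set β} :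
    (f '' A ∪ g '' B) \ (f '' C ∪ g '' D) = f '' (A \ C) ∪ g '' (B \ D) := by
  ext c
  constructor
  · rintro ⟨⟨a, ha, rfl⟩ | ⟨b, hb, rfl⟩, hnot⟩
    · exact Or.inl ⟨a, ⟨ha, fun hC => hnot (Or.inl ⟨a, hC, rfl⟩)⟩, rfl⟩
    · exact Or.inr ⟨b, ⟨hb, fun hD => hnot (Or.inr ⟨b, hD, rfl⟩)⟩, rfl⟩
  · rintro (⟨a, ⟨ha, hna⟩, rfl⟩ | ⟨b, ⟨hb, hnb⟩, rfl⟩)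
    · refine ⟨Or.inl ⟨a, ha, rfl⟩, ?_⟩
      rintro (⟨a', ha', heq⟩ | ⟨b', hb', heq⟩)
      · exact hna (hf heq ▸ ha')
      · exact hfg a b' heq.symm
    · refine ⟨Or.inr ⟨b, hb, rfl⟩, ?_⟩
      rintro (⟨a', ha', heq⟩ | ⟨b', hb', heq⟩)
      · exact hfg a' b heq
      · exact hnb (hg heq ▸ hb')
end Split

/-- Equivalence of the movement condition for `x̄ ∪ x∨` with the four
conditions of equation (12) of Buckley–Garner (for `j` odd). -/
theorem movement_equiv (n j : ℕ) (hj : Odd j)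
    (x : Set (Simplex n (j+1))) (m p : Set (Simplex n j))
    (xb : Set (Simplex n (j+2))) (mb pb : Set (Simplex n (j+1))) :
    Moves (liftS '' xb ∪ vee '' x) (liftS '' mb ∪ vee '' m) (liftS '' pb ∪ vee '' p) ↔
      (p = (m ∪ setPos x) \ setNeg x ∧
       m = (p ∪ setNeg x) \ setPos x ∧
       pb = (mb ∪ setPos xb) \ (setNeg xb ∪ x) ∧
       mb = (pb ∪ setNeg xb ∪ x) \ setPos xb) := by
  have hLi : Function.Injective (liftS (n := n) (j := j+1)) := liftS_inj
  have hVi : Function.Injective (vee (n := n) (j := j)) := vee_inj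
  have hLV : ∀ (a : Simplex n (j+1)) (b : Simplex n j), liftS a ≠ vee b :=
    fun a b h => (liftS_ne_vee a b h).elim
  unfold Moves
  rw [setPos_union, setNeg_union, setPos_liftS, setNeg_liftS, setPos_vee hj, setNeg_vee hj]
  have hU1 : (liftS '' mb ∪ vee '' m) ∪ (liftS '' setPos xb ∪ vee '' setPos x)
      = liftS '' (mb ∪ setPos xb) ∪ vee '' (m ∪ setPos x) := by
    rw [Set.image_union, Set.image_union]
    ext c; simp only [Set.mem_union]; tauto
  have hU2 : (liftS '' pb ∪ vee '' p) ∪ (liftS '' setNeg xb ∪ (vee '' setNeg x ∪ liftS '' x))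
      = liftS '' (pb ∪ (setNeg xb ∪ x)) ∪ vee '' (p ∪ setNeg x) := by
    rw [Set.image_union, Set.image_union, Set.image_union]
    ext c; simp only [Set.mem_union]; tauto
  have hN : liftS '' setNeg xb ∪ (vee '' setNeg x ∪ liftS '' x)
      = liftS '' (setNeg xb ∪ x) ∪ vee '' setNeg x := by
    rw [Set.image_union]
    ext c; simp only [Set.mem_union]; tauto
  rw [hU1, hU2, hN, diff_split hLi hVi hLV, diff_split hLi hVi hLV,
    union_eq_iff hLi hVi hLV, union_eq_iff hLi hVi hLV, ← Set.union_assoc pb (setNeg xb) x]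
  tauto
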